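/- arXiv:1211.4282 — 3 statements merged into one kernel-verified Lean document; each statement's English description precedes it below -/
import Mathlib

section
/- The approximation error of the smooth maximum is uniformly bounded: for any λ > 0 and any g ∈ ℝ^J, 0 ≤ max_j g_j − m_λ(g) ≤ λ^{-1} · W((J−1)/e), where W is the Lambert product-logarithm function. -/
open Real Finset

private lemma per_term (d w : ℝ) : Real.exp (-d) * (d - w) ≤ Real.exp (-(w+1)) := by
  have h := Real.add_one_le_exp (d - w - 1)
  have h1 : d - w ≤ Real.exp (d - w - 1) := by linarith
  calc Real.exp (-d) * (d - w) ≤ Real.exp (-d) * Real.exp (d - w - 1) :=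
        mul_le_mul_of_nonneg_left h1 (Real.exp_pos _).le
    _ = Real.exp (-(w+1)) := by rw [← Real.exp_add]; ring_nf

/-- Uniform bound on the approximation error of the smooth maximum:
`0 ≤ max_j g_j − m_λ(g) ≤ λ⁻¹ · W((J−1)/e)`, where `W` is the Lambert product-logarithm,
characterized here as the unique `w ≥ 0` with `w · exp w = (J−1)/e`. -/
theorem smoothMax_error_bound {J : ℕ} (hJ : 0 < J) (g : Fin J → ℝ) (lam : ℝ) (hlam : 0 < lam)
    (w : ℝ) (hw0 : 0 ≤ w) (hW : w * Real.exp w = ((J : ℝ) - 1) / Real.exp 1) :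
    0 ≤ Finset.univ.sup' (Finset.univ_nonempty_iff.mpr ⟨⟨0, hJ⟩⟩) g
        - ∑ j : Fin J, (Real.exp (lam * g j) / ∑ l : Fin J, Real.exp (lam * g l)) * g j ∧
    Finset.univ.sup' (Finset.univ_nonempty_iff.mpr ⟨⟨0, hJ⟩⟩) g
        - ∑ j : Fin J, (Real.exp (lam * g j) / ∑ l : Fin J, Real.exp (lam * g l)) * g j
      ≤ lam⁻¹ * w := by
  have hne : (Finset.univ : Finset (Fin J)).Nonempty := Finset.univ_nonempty_iff.mpr ⟨⟨0, hJ⟩⟩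
  set M := Finset.univ.sup' (Finset.univ_nonempty_iff.mpr ⟨⟨0, hJ⟩⟩) g with hM
  set S := ∑ l : Fin J, Real.exp (lam * g l) with hS
  obtain ⟨j0, -, hj0⟩ := Finset.exists_mem_eq_sup' hne g
  have hle : ∀ j, g j ≤ M := fun j => Finset.le_sup' g (Finset.mem_univ j)
  have hSpos : 0 < S := Finset.sum_pos (fun l _ => Real.exp_pos _) hne
  have h1 : ∑ j : Fin J, Real.exp (lam * g j) / S = 1 := by
    rw [← Finset.sum_div, ← hS, div_self hSpos.ne']
  have key : M - ∑ j : Fin J, (Real.exp (lam * g j) / S) * g j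
      = ∑ j : Fin J, (Real.exp (lam * g j) / S) * (M - g j) := by
    simp_rw [mul_sub]
    rw [Finset.sum_sub_distrib, ← Finset.sum_mul, h1, one_mul]
  constructor
  · rw [key]
    exact Finset.sum_nonneg fun j _ =>
      mul_nonneg (div_nonneg (Real.exp_pos _).le hSpos.le) (sub_nonneg.mpr (hle j))
  · rw [key]
    -- claim A
    have claimA : ∑ j : Fin J, Real.exp (-(lam*(M - g j))) * (lam*(M - g j) - w) ≤ 0 := by
      rw [← Finset.add_sum_erase _ _ (Finset.mem_univ j0)]
      have hterm0 : Real.exp (-(lam*(M - g j0))) * (lam*(M - g j0) - w) = -w := by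
        rw [← hj0]; simp [M]
      rw [hterm0]
      have hrest : ∑ j ∈ Finset.univ.erase j0, Real.exp (-(lam*(M-g j))) * (lam*(M-g j) - w)
          ≤ ∑ j ∈ Finset.univ.erase j0, Real.exp (-(w+1)) :=
        Finset.sum_le_sum fun j _ => per_term _ _
      have hcard : (((Finset.univ : Finset (Fin J)).erase j0).card : ℝ) = (J:ℝ) - 1 := by
        rw [Finset.card_erase_of_mem (Finset.mem_univ _)]
        simp [Nat.cast_sub hJ]
      have hsum : ∑ _j ∈ Finset.univ.erase j0, Real.exp (-(w+1)) = ((J:ℝ)-1) * Real.exp (-(w+1)) := by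
        rw [Finset.sum_const, nsmul_eq_mul, hcard]
      have h2 : ((J:ℝ)-1) = w * Real.exp w * Real.exp 1 := by
        have e1 : Real.exp 1 ≠ 0 := (Real.exp_pos 1).ne'
        field_simp at hW; linarith
      have hJw : ((J:ℝ)-1) * Real.exp (-(w+1)) = w := by
        calc ((J:ℝ)-1) * Real.exp (-(w+1))
            = w * (Real.exp w * (Real.exp 1 * Real.exp (-(w+1)))) := by rw [h2]; ring
          _ = w := by rw [← Real.exp_add, ← Real.exp_add]; norm_num
      linarith [hrest, hsum.symm ▸ hrest]
    -- claim B
    have claimB : ∑ j : Fin J, Real.exp (lam*g j) * (lam*(M - g j) - w) ≤ 0 := by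
      have heq : ∑ j : Fin J, Real.exp (lam*g j) * (lam*(M - g j) - w)
          = Real.exp (lam*M) * ∑ j : Fin J, Real.exp (-(lam*(M-g j))) * (lam*(M-g j) - w) := by
        rw [Finset.mul_sum]
        refine Finset.sum_congr rfl fun j _ => ?_
        rw [← mul_assoc, ← Real.exp_add]; ring_nf
      rw [heq]
      exact mul_nonpos_of_nonneg_of_nonpos (Real.exp_pos _).le claimA
    have hexp : lam * ∑ j : Fin J, Real.exp (lam*g j) * (M - g j) ≤ w * S := by
      have : ∑ j : Fin J, Real.exp (lam*g j) * (lam*(M - g j) - w)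
          = lam * ∑ j : Fin J, Real.exp (lam*g j) * (M - g j) - w * S := by
        rw [hS, Finset.mul_sum, Finset.mul_sum, ← Finset.sum_sub_distrib]
        exact Finset.sum_congr rfl fun j _ => by ring
      linarith [this ▸ claimB]
    have hfin : ∑ j : Fin J, (Real.exp (lam * g j) / S) * (M - g j)
        = (∑ j : Fin J, Real.exp (lam*g j) * (M - g j)) / S := by
      rw [Finset.sum_div]
      exact Finset.sum_congr rfl fun j _ => by ring
    rw [hfin, div_le_iff₀ hSpos]
    rw [inv_mul_eq_div, div_mul_eq_mul_div, le_div_iff₀ hlam] at *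
    nlinarith [hexp]
end

section
/- The function F(h_2,...,h_J) := (Σ_{j=2}^J e^{-h_j} h_j) / (1 + Σ_{j=2}^J e^{-h_j}) on [0,∞)^{J-1} attains its maximum value W((J−1)/e) at the symmetric point h_2 = ... = h_J = 1 + W((J−1)/e), where W is the Lambert function. -/
open Real Finset

/-- The function `F(h) = (Σ e^{-h_j} h_j)/(1 + Σ e^{-h_j})` on the nonnegative orthant
attains its maximum value `W* = W((J−1)/e)` at the symmetric point `h_j = 1 + W*`.
Here `n = J - 1 ≥ 1` and `W*` is characterized by `W* ≥ 0`, `W* · exp W* = (J−1)/e = n/e`. -/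
theorem F_max_lambert {n : ℕ} (hn : 0 < n) (W : ℝ) (hW0 : 0 ≤ W)
    (hW : W * Real.exp W = (n : ℝ) / Real.exp 1) :
    (∀ h : Fin n → ℝ, (∀ j, 0 ≤ h j) →
      (∑ j : Fin n, Real.exp (-h j) * h j) / (1 + ∑ j : Fin n, Real.exp (-h j)) ≤ W) ∧
    (∑ j : Fin n, Real.exp (-(1 + W)) * (1 + W)) / (1 + ∑ j : Fin n, Real.exp (-(1 + W))) = W := by
  have hnR : (0 : ℝ) < n := by exact_mod_cast hn
  -- W > 0
  have hWpos : 0 < W := by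
    rcases lt_or_eq_of_le hW0 with h | h
    · exact h
    · exfalso
      have hpos : (0 : ℝ) < (n : ℝ) / Real.exp 1 := div_pos hnR (Real.exp_pos 1)
      rw [← h] at hW; simp at hW; linarith
  -- key: exp(-(1+W)) = W / n
  have hkey : Real.exp (-(1 + W)) = W / n := by
    have h1 : W * Real.exp W * Real.exp 1 = (n : ℝ) := by
      rw [hW]; field_simp
    have h2 : Real.exp (-(1 + W)) * (Real.exp W * Real.exp 1) = 1 := by
      rw [← Real.exp_add, ← Real.exp_add]; ring_nf; exact Real.exp_zero
    rw [eq_div_iff hnR.ne']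
    calc Real.exp (-(1 + W)) * n = Real.exp (-(1 + W)) * (W * Real.exp W * Real.exp 1) := by
          rw [h1]
      _ = W * (Real.exp (-(1 + W)) * (Real.exp W * Real.exp 1)) := by ring
      _ = W := by rw [h2]; ring
  -- pointwise: exp(-x) * (x - W) ≤ exp(-(1+W))
  have hpt : ∀ x : ℝ, Real.exp (-x) * (x - W) ≤ Real.exp (-(1 + W)) := by
    intro x
    have h1 : (x - (1 + W)) + 1 ≤ Real.exp (x - (1 + W)) := Real.add_one_le_exp _
    have h2 : Real.exp (-x) * Real.exp (x - (1 + W)) = Real.exp (-(1 + W)) := by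
      rw [← Real.exp_add]; ring_nf
    nlinarith [Real.exp_pos (-x), mul_le_mul_of_nonneg_left h1 (Real.exp_pos (-x)).le]
  constructor
  · intro h hpos
    have hD : (0 : ℝ) < 1 + ∑ j : Fin n, Real.exp (-h j) := by
      have : (0:ℝ) ≤ ∑ j : Fin n, Real.exp (-h j) :=
        Finset.sum_nonneg fun j _ => (Real.exp_pos _).le
      linarith
    rw [div_le_iff₀ hD]
    have hsum : ∑ j : Fin n, Real.exp (-h j) * (h j - W) ≤ W := by
      calc ∑ j : Fin n, Real.exp (-h j) * (h j - W)
          ≤ ∑ j : Fin n, Real.exp (-(1 + W)) :=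
            Finset.sum_le_sum fun j _ => hpt (h j)
        _ = n * Real.exp (-(1 + W)) := by simp [mul_comm]
        _ = W := by rw [hkey]; field_simp
    have expand : ∑ j : Fin n, Real.exp (-h j) * (h j - W)
        = (∑ j : Fin n, Real.exp (-h j) * h j) - W * ∑ j : Fin n, Real.exp (-h j) := by
      rw [Finset.mul_sum, ← Finset.sum_sub_distrib]
      congr 1; ext j; ring
    rw [expand] at hsum
    linarith
  · have hs : ∑ j : Fin n, Real.exp (-(1 + W)) * (1 + W)
        = W * (1 + W) := by
      rw [Finset.sum_const, Finset.card_univ, Fintype.card_fin, nsmul_eq_mul, hkey]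
      field_simp
    have hs2 : ∑ j : Fin n, Real.exp (-(1 + W)) = W := by
      rw [Finset.sum_const, Finset.card_univ, Fintype.card_fin, nsmul_eq_mul, hkey]
      field_simp
    rw [hs, hs2, mul_div_assoc, div_self (by linarith), mul_one]
end

section
/- Chetty's optimization-friction bound: for ε, ε^o > 0 and Δ > 0, the value δ_OF(ε) := (ε − ε^o)²·Δ²/(8ε) satisfies: ε lies in the interval [ε_L, ε_U] determined by the equations ε^o = ε_U − 2(2ε_U δ)^{1/2}/Δ and ε^o = ε_L + 2(2ε_L δ)^{1/2}/Δ if and only if δ ≥ δ_OF(ε). -/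
open Real

/-- Chetty's optimization-friction bound: if `ε_L ≤ ε^o ≤ ε_U` solve
`ε^o = ε_U − 2√(2 ε_U δ)/Δ` and `ε^o = ε_L + 2√(2 ε_L δ)/Δ`, then a structural elasticity
`ε > 0` satisfies `ε ∈ [ε_L, ε_U]` iff `δ ≥ δ_OF(ε) = (ε − ε^o)² Δ² / (8ε)`. -/
theorem chetty_bound (εo Δ δ εL εU : ℝ) (hεo : 0 < εo) (hΔ : 0 < Δ) (hδ : 0 ≤ δ)
    (hL0 : 0 < εL) (hLo : εL ≤ εo) (hoU : εo ≤ εU)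
    (hU : εo = εU - 2 * Real.sqrt (2 * εU * δ) / Δ)
    (hL : εo = εL + 2 * Real.sqrt (2 * εL * δ) / Δ) :
    ∀ ε : ℝ, 0 < ε →
      ((εL ≤ ε ∧ ε ≤ εU) ↔ (ε - εo) ^ 2 * Δ ^ 2 / (8 * ε) ≤ δ) := by
  have hU0 : (0 : ℝ) < εU := lt_of_lt_of_le hεo hoU
  have eU : 2 * Real.sqrt (2 * εU * δ) = (εU - εo) * Δ := by
    have h : 2 * Real.sqrt (2 * εU * δ) / Δ = εU - εo := by linarith
    exact (div_eq_iff hΔ.ne').mp h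
  have eL : 2 * Real.sqrt (2 * εL * δ) = (εo - εL) * Δ := by
    have h : 2 * Real.sqrt (2 * εL * δ) / Δ = εo - εL := by linarith
    exact (div_eq_iff hΔ.ne').mp h
  have hsU : Real.sqrt (2 * εU * δ) ^ 2 = 2 * εU * δ := Real.sq_sqrt (by positivity)
  have hsL : Real.sqrt (2 * εL * δ) ^ 2 = 2 * εL * δ := Real.sq_sqrt (by positivity)
  have h1 : (εU - εo) ^ 2 * Δ ^ 2 = 8 * δ * εU := by
    have : (2 * Real.sqrt (2 * εU * δ)) ^ 2 = ((εU - εo) * Δ) ^ 2 := by rw [eU]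
    rw [mul_pow, hsU] at this
    nlinarith [this]
  have h2 : (εo - εL) ^ 2 * Δ ^ 2 = 8 * δ * εL := by
    have : (2 * Real.sqrt (2 * εL * δ)) ^ 2 = ((εo - εL) * Δ) ^ 2 := by rw [eL]
    rw [mul_pow, hsL] at this
    nlinarith [this]
  have hΔ2 : (0 : ℝ) < Δ ^ 2 := by positivity
  -- Vieta relations
  have hsum : Δ ^ 2 * (εL + εU) = 2 * Δ ^ 2 * εo + 8 * δ := by
    rcases eq_or_lt_of_le (hLo.trans hoU) with heq | hlt
    · have hLeo : εL = εo := le_antisymm hLo (heq ▸ hoU)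
      have h0 : 8 * δ * εo = 0 := by rw [hLeo] at h2; linarith [h2]
      have hδ0 : δ = 0 := by
        have h8 : (8 * εo : ℝ) ≠ 0 := by positivity
        have hz : δ * (8 * εo) = 0 := by linarith
        exact (mul_eq_zero.mp hz).resolve_right h8
      rw [← heq, hLeo, hδ0]; ring
    · have hne : εU - εL ≠ 0 := (sub_pos.mpr hlt).ne'
      have hdiff : (Δ ^ 2 * (εU + εL - 2 * εo)) * (εU - εL) = (8 * δ) * (εU - εL) := by
        linear_combination h1 - h2
      have := mul_right_cancel₀ hne hdiff
      linarith [this]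
  have hprodΔ : Δ ^ 2 * (εL * εU) = Δ ^ 2 * εo ^ 2 := by
    linear_combination εU * hsum - h1
  intro ε hε
  have h8ε : (0 : ℝ) < 8 * ε := by positivity
  have hsumε : Δ ^ 2 * (εL + εU) * ε = (2 * Δ ^ 2 * εo + 8 * δ) * ε := by rw [hsum]
  constructor
  · rintro ⟨hl, hu⟩
    rw [div_le_iff₀ h8ε]
    have hkey : 0 ≤ Δ ^ 2 * ((ε - εL) * (εU - ε)) :=
      mul_nonneg hΔ2.le (mul_nonneg (by linarith) (by linarith))
    linarith [hkey, hsumε, hprodΔ]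
  · intro h
    have h' : (ε - εo) ^ 2 * Δ ^ 2 ≤ δ * (8 * ε) := (div_le_iff₀ h8ε).mp h
    have hnp : Δ ^ 2 * ((ε - εL) * (ε - εU)) ≤ 0 := by
      linarith [h', hsumε, hprodΔ]
    have key : (ε - εL) * (ε - εU) ≤ 0 := by
      by_contra hc
      push_neg at hc
      nlinarith [mul_pos hΔ2 hc]
    have hLU : εL ≤ εU := hLo.trans hoU
    rcases mul_nonpos_iff.mp key with ⟨ha, hb⟩ | ⟨ha, hb⟩ <;>
      exact ⟨by linarith, by linarith⟩
end
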